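/- Let (R_n)_{n≥1} be a nondecreasing sequence of nonnegative reals with R_n ≤ c·n for some constant c > 0, and for λ > 0 define R^λ = (1 − e^{−λ}) · Σ_{n=1}^∞ e^{−nλ} R_n. Then the following are equivalent: (i) for every a > 0, R_T = o(T^a) as T → ∞; (ii) for every a > 0, R^λ = o(λ^{−a}) as λ → 0⁺. -/

import Mathlib

open Filter Real

/-- The discounted aggregate `R^lam = (1 - e^{-lam}) * sum_{n>=1} e^{-n lam} R_n`. -/
noncomputable def discountedAggregate (R : ℕ → ℝ) (lam : ℝ) : ℝ :=
  (1 - Real.exp (-lam)) * ∑' n : ℕ, Real.exp (-((n : ℝ) + 1) * lam) * R (n + 1)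

lemma ConsistencyAux.geom_shift {r : ℝ} (h0 : 0 ≤ r) (h1 : r < 1) :
    ∑' n : ℕ, r ^ (n + 1) = r / (1 - r) := by
  have h : (fun n : ℕ => r ^ (n + 1)) = fun n : ℕ => r ^ n * r := by
    funext n; rw [pow_succ]
  rw [h, tsum_mul_right, tsum_geometric_of_lt_one h0 h1]
  field_simp

lemma ConsistencyAux.summable_geom_shift {r : ℝ} (h0 : 0 ≤ r) (h1 : r < 1) :
    Summable fun n : ℕ => r ^ (n + 1) :=
  ((summable_geometric_of_lt_one h0 h1).mul_right r).congr fun n => (pow_succ r n).symm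

lemma ConsistencyAux.summable_mulgeom {s : ℝ} (h0 : 0 ≤ s) (h1 : s < 1) :
    Summable fun n : ℕ => ((n : ℝ) + 1) * s ^ (n + 1) := by
  have hs : ‖s‖ < 1 := by rwa [Real.norm_eq_abs, abs_of_nonneg h0]
  have h := summable_pow_mul_geometric_of_norm_lt_one (R := ℝ) 1 hs
  have h2 := (summable_nat_add_iff 1).mpr h
  refine h2.congr fun n => ?_
  push_cast
  ring

lemma ConsistencyAux.tsum_mulgeom {s : ℝ} (h0 : 0 ≤ s) (h1 : s < 1) :
    ∑' n : ℕ, ((n : ℝ) + 1) * s ^ (n + 1) = s / (1 - s) ^ 2 := by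
  have hs : ‖s‖ < 1 := by rwa [Real.norm_eq_abs, abs_of_nonneg h0]
  have hsum : Summable fun n : ℕ => (n : ℝ) * s ^ n := by
    have h := summable_pow_mul_geometric_of_norm_lt_one (R := ℝ) 1 hs
    exact h.congr fun n => by push_cast; ring
  have h := Summable.tsum_eq_zero_add hsum
  rw [tsum_coe_mul_geometric_of_norm_lt_one hs] at h
  push_cast at h
  rw [h]
  ring

lemma ConsistencyAux.exp_pow_eq {lam : ℝ} (n : ℕ) :
    Real.exp (-((n : ℝ) + 1) * lam) = Real.exp (-lam) ^ (n + 1) := by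
  rw [show -((n : ℝ) + 1) * lam = ((n + 1 : ℕ) : ℝ) * (-lam) by push_cast; ring,
    Real.exp_nat_mul]

lemma ConsistencyAux.summable_main (R : ℕ → ℝ) (c : ℝ)
    (hnonneg : ∀ n : ℕ, 1 ≤ n → 0 ≤ R n)
    (hlin : ∀ n : ℕ, 1 ≤ n → R n ≤ c * n) {lam : ℝ} (hl : 0 < lam) :
    Summable fun n : ℕ => Real.exp (-((n : ℝ) + 1) * lam) * R (n + 1) := by
  have hr0 : (0:ℝ) ≤ Real.exp (-lam) := (Real.exp_pos _).le
  have hs : ‖Real.exp (-lam)‖ < 1 := by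
    rw [Real.norm_eq_abs, abs_of_nonneg hr0, Real.exp_lt_one_iff]; linarith
  have hb : Summable fun n : ℕ => c * (((n : ℝ) + 1) * Real.exp (-lam) ^ (n + 1)) := by
    refine Summable.mul_left c ?_
    have h := summable_pow_mul_geometric_of_norm_lt_one (R := ℝ) 1 hs
    exact ((summable_nat_add_iff 1).mpr h).congr fun n => by push_cast; ring
  refine Summable.of_nonneg_of_le (fun n => ?_) (fun n => ?_) hb
  · exact mul_nonneg (Real.exp_pos _).le (hnonneg _ (by omega))
  · rw [ConsistencyAux.exp_pow_eq]
    calc Real.exp (-lam) ^ (n + 1) * R (n + 1)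
        ≤ Real.exp (-lam) ^ (n + 1) * (c * (n + 1)) := by
          refine mul_le_mul_of_nonneg_left ?_ (by positivity)
          have := hlin (n + 1) (by omega); push_cast at this; linarith
      _ = c * (((n : ℝ) + 1) * Real.exp (-lam) ^ (n + 1)) := by push_cast; ring

lemma ConsistencyAux.upper_bound (R : ℕ → ℝ) (c : ℝ) (hc : 0 < c)
    (hnonneg : ∀ n : ℕ, 1 ≤ n → 0 ≤ R n)
    (hmono : ∀ m n : ℕ, 1 ≤ m → m ≤ n → R m ≤ R n)
    (hlin : ∀ n : ℕ, 1 ≤ n → R n ≤ c * n)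
    {lam : ℝ} (hl0 : 0 < lam) (hl1 : lam ≤ 1) {N : ℕ} (hN : 1 ≤ N) :
    discountedAggregate R lam ≤
      R N + 4 * c * Real.exp 1 * Real.exp (-(N : ℝ) * lam / 2) / lam := by
  set r : ℝ := Real.exp (-lam) with hrdef
  set s : ℝ := Real.exp (-(lam / 2)) with hsdef
  have hr0 : (0:ℝ) < r := Real.exp_pos _
  have hr1 : r < 1 := by rw [hrdef, Real.exp_lt_one_iff]; linarith
  have hs0 : (0:ℝ) < s := Real.exp_pos _
  have hs1 : s < 1 := by rw [hsdef, Real.exp_lt_one_iff]; linarith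
  have hrs : r = s * s := by rw [hrdef, hsdef, ← Real.exp_add]; ring_nf
  have hRN : 0 ≤ R N := hnonneg N hN
  set K : ℝ := c * Real.exp (-(N : ℝ) * lam / 2) with hKdef
  have hK0 : 0 ≤ K := mul_nonneg hc.le (Real.exp_pos _).le
  have hpt : ∀ n : ℕ, Real.exp (-((n : ℝ) + 1) * lam) * R (n + 1) ≤
      R N * r ^ (n + 1) + K * (((n : ℝ) + 1) * s ^ (n + 1)) := by
    intro n
    rcases le_or_gt (n + 1) N with hcase | hcase
    · have h1 : R (n + 1) ≤ R N := hmono (n + 1) N (by omega) hcase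
      have h2 : Real.exp (-((n : ℝ) + 1) * lam) * R (n + 1) ≤ R N * r ^ (n + 1) := by
        rw [ConsistencyAux.exp_pow_eq]
        calc r ^ (n+1) * R (n+1) ≤ r ^ (n+1) * R N :=
              mul_le_mul_of_nonneg_left h1 (by positivity)
          _ = R N * r ^ (n+1) := by ring
      have h3 : 0 ≤ K * (((n : ℝ) + 1) * s ^ (n + 1)) := by positivity
      linarith
    · have hNn : (N : ℝ) ≤ (n : ℝ) + 1 := by exact_mod_cast hcase.le
      have h1 : R (n + 1) ≤ c * ((n : ℝ) + 1) := by
        have := hlin (n + 1) (by omega); push_cast at this; linarith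
      have hexp : Real.exp (-((n : ℝ) + 1) * lam) ≤
          Real.exp (-(N : ℝ) * lam / 2) * s ^ (n + 1) := by
        have h2 : Real.exp (-((n:ℝ)+1) * lam) ≤
            Real.exp (-(N : ℝ) * lam / 2 + (-((n:ℝ)+1) * (lam/2))) := by
          apply Real.exp_le_exp.mpr
          nlinarith
        have h3 : Real.exp (-(N : ℝ) * lam / 2 + (-((n:ℝ)+1) * (lam/2)))
            = Real.exp (-(N : ℝ) * lam / 2) * s ^ (n + 1) := by
          rw [Real.exp_add]
          congr 1
          exact ConsistencyAux.exp_pow_eq (lam := lam/2) n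
        linarith
      have h4 : Real.exp (-((n : ℝ) + 1) * lam) * R (n + 1) ≤
          K * (((n : ℝ) + 1) * s ^ (n + 1)) := by
        have hR1 : 0 ≤ R (n+1) := hnonneg _ (by omega)
        calc Real.exp (-((n : ℝ) + 1) * lam) * R (n + 1)
            ≤ Real.exp (-((n : ℝ) + 1) * lam) * (c * ((n : ℝ) + 1)) :=
              mul_le_mul_of_nonneg_left h1 (Real.exp_pos _).le
          _ ≤ (Real.exp (-(N : ℝ) * lam / 2) * s ^ (n + 1)) * (c * ((n : ℝ) + 1)) := by
              refine mul_le_mul_of_nonneg_right hexp (by positivity)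
          _ = K * (((n : ℝ) + 1) * s ^ (n + 1)) := by rw [hKdef]; ring
      have h5 : 0 ≤ R N * r ^ (n + 1) := by positivity
      linarith
  have sumf := ConsistencyAux.summable_main R c hnonneg hlin hl0
  have sum1 : Summable fun n : ℕ => R N * r ^ (n + 1) :=
    (ConsistencyAux.summable_geom_shift hr0.le hr1).mul_left _
  have sum2 : Summable fun n : ℕ => K * (((n : ℝ) + 1) * s ^ (n + 1)) :=
    (ConsistencyAux.summable_mulgeom hs0.le hs1).mul_left _
  have htsum : (∑' n : ℕ, Real.exp (-((n : ℝ) + 1) * lam) * R (n + 1)) ≤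
      R N * (r / (1 - r)) + K * (s / (1 - s) ^ 2) := by
    calc (∑' n : ℕ, Real.exp (-((n : ℝ) + 1) * lam) * R (n + 1))
        ≤ ∑' n : ℕ, (R N * r ^ (n + 1) + K * (((n : ℝ) + 1) * s ^ (n + 1))) :=
          Summable.tsum_le_tsum hpt sumf (sum1.add sum2)
      _ = R N * (r / (1 - r)) + K * (s / (1 - s) ^ 2) := by
          rw [Summable.tsum_add sum1 sum2, tsum_mul_left, tsum_mul_left,
            ConsistencyAux.geom_shift hr0.le hr1, ConsistencyAux.tsum_mulgeom hs0.le hs1]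
  have h1r : 0 < 1 - r := by linarith
  have h1s : 0 < 1 - s := by linarith
  have hbound : (1 - r) * (R N * (r / (1 - r)) + K * (s / (1 - s) ^ 2)) ≤
      R N + 4 * c * Real.exp 1 * Real.exp (-(N : ℝ) * lam / 2) / lam := by
    have e1 : (1 - r) * (R N * (r / (1 - r))) = R N * r := by
      field_simp
    have e2 : (1 - r) * (K * (s / (1 - s) ^ 2)) = K * ((1 + s) * s / (1 - s)) := by
      rw [hrs]; field_simp; ring
    have hA : s * (lam / 2) ≤ 1 - s := by
      have h := Real.add_one_le_exp (lam / 2)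
      have hinv : s * Real.exp (lam / 2) = 1 := by
        rw [hsdef, ← Real.exp_add]; simp
      nlinarith [mul_le_mul_of_nonneg_left h hs0.le]
    have hE : (1:ℝ) ≤ Real.exp 1 := by
      have := Real.add_one_le_exp (1:ℝ); linarith
    have h4 : (1 + s) * s / (1 - s) ≤ 4 * Real.exp 1 / lam := by
      rw [div_le_div_iff₀ h1s hl0]
      nlinarith
    have h5 : R N * r ≤ R N := by nlinarith
    have h6 : K * ((1 + s) * s / (1 - s)) ≤ K * (4 * Real.exp 1 / lam) :=
      mul_le_mul_of_nonneg_left h4 hK0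
    have e3 : K * (4 * Real.exp 1 / lam) =
        4 * c * Real.exp 1 * Real.exp (-(N : ℝ) * lam / 2) / lam := by
      rw [hKdef]; ring
    calc (1 - r) * (R N * (r / (1 - r)) + K * (s / (1 - s) ^ 2))
        = R N * r + K * ((1 + s) * s / (1 - s)) := by rw [mul_add, e1, e2]
      _ ≤ R N + 4 * c * Real.exp 1 * Real.exp (-(N : ℝ) * lam / 2) / lam := by
          rw [← e3]; linarith
  calc discountedAggregate R lam
      ≤ (1 - r) * (R N * (r / (1 - r)) + K * (s / (1 - s) ^ 2)) :=
        mul_le_mul_of_nonneg_left htsum h1r.le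
    _ ≤ _ := hbound

lemma ConsistencyAux.lower_bound (R : ℕ → ℝ) (c : ℝ)
    (hnonneg : ∀ n : ℕ, 1 ≤ n → 0 ≤ R n)
    (hmono : ∀ m n : ℕ, 1 ≤ m → m ≤ n → R m ≤ R n)
    (hlin : ∀ n : ℕ, 1 ≤ n → R n ≤ c * n)
    {lam : ℝ} (hl : 0 < lam) {T : ℕ} (hT : 1 ≤ T) :
    R T * Real.exp (-(T : ℝ) * lam) ≤ discountedAggregate R lam := by
  set r : ℝ := Real.exp (-lam) with hrdef
  have hr0 : (0:ℝ) < r := Real.exp_pos _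
  have hr1 : r < 1 := by rw [hrdef, Real.exp_lt_one_iff]; linarith
  set f : ℕ → ℝ := fun m => (Real.exp (-(T : ℝ) * lam) * R T) * r ^ m with hfdef
  set g : ℕ → ℝ := fun n => Real.exp (-((n : ℝ) + 1) * lam) * R (n + 1) with hgdef
  have hRT : 0 ≤ R T := hnonneg T hT
  have hgnn : ∀ n, 0 ≤ g n := fun n =>
    mul_nonneg (Real.exp_pos _).le (hnonneg _ (by omega))
  have hfg : ∀ m : ℕ, f m ≤ g (m + (T - 1)) := by
    intro m
    have hidx : m + (T - 1) + 1 = m + T := by omega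
    have hcast : ((m + (T - 1) : ℕ) : ℝ) + 1 = (m : ℝ) + (T : ℝ) := by
      have : ((m + (T - 1) + 1 : ℕ) : ℝ) = ((m + T : ℕ) : ℝ) := by rw [hidx]
      push_cast at this ⊢; linarith
    have hexp : Real.exp (-(((m + (T - 1) : ℕ) : ℝ) + 1) * lam)
        = Real.exp (-(T : ℝ) * lam) * r ^ m := by
      rw [hcast, show -((m : ℝ) + (T : ℝ)) * lam =
        -(T : ℝ) * lam + (m : ℕ) * (-lam) by push_cast; ring, Real.exp_add,
        Real.exp_nat_mul]
    have hRle : R T ≤ R (m + (T - 1) + 1) := hmono T _ hT (by omega)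
    calc f m = Real.exp (-(((m + (T - 1) : ℕ) : ℝ) + 1) * lam) * R T := by
          rw [hexp, hfdef]; ring
      _ ≤ g (m + (T - 1)) := mul_le_mul_of_nonneg_left hRle (Real.exp_pos _).le
  have hsumf : Summable f := (summable_geometric_of_lt_one hr0.le hr1).mul_left _
  have hsumg : Summable g := ConsistencyAux.summable_main R c hnonneg hlin hl
  have hinj : Function.Injective (fun m : ℕ => m + (T - 1)) := fun a b h => by
    simpa using h
  have htsum : (∑' m, f m) ≤ ∑' n, g n :=
    hsumf.tsum_le_tsum_of_inj _ hinj (fun n _ => hgnn n) hfg hsumg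
  have hf : (∑' m, f m) = (Real.exp (-(T : ℝ) * lam) * R T) * (1 - r)⁻¹ := by
    rw [hfdef, tsum_mul_left, tsum_geometric_of_lt_one hr0.le hr1]
  have h1r : 0 < 1 - r := by linarith
  calc R T * Real.exp (-(T : ℝ) * lam)
      = (1 - r) * ((Real.exp (-(T : ℝ) * lam) * R T) * (1 - r)⁻¹) := by
        field_simp
    _ = (1 - r) * ∑' m, f m := by rw [hf]
    _ ≤ (1 - r) * ∑' n, g n := mul_le_mul_of_nonneg_left htsum h1r.le

/-- T-consistency is equivalent to lam-consistency for a nondecreasing nonnegative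
sequence growing at most linearly. -/
theorem consistency_equiv (R : ℕ → ℝ) (c : ℝ) (hc : 0 < c)
    (hnonneg : ∀ n : ℕ, 1 ≤ n → 0 ≤ R n)
    (hmono : ∀ m n : ℕ, 1 ≤ m → m ≤ n → R m ≤ R n)
    (hlin : ∀ n : ℕ, 1 ≤ n → R n ≤ c * n) :
    (∀ a : ℝ, 0 < a →
        Tendsto (fun T : ℕ => R T / (T : ℝ) ^ a) atTop (nhds 0)) ↔
    (∀ a : ℝ, 0 < a →
        Tendsto (fun lam : ℝ => discountedAggregate R lam * lam ^ a)
          (nhdsWithin 0 (Set.Ioi 0)) (nhds 0)) := by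
  have hdanonneg : ∀ lam : ℝ, 0 < lam → 0 ≤ discountedAggregate R lam := by
    intro lam hl
    have h1 : (0:ℝ) ≤ 1 - Real.exp (-lam) := by
      have : Real.exp (-lam) < 1 := by rw [Real.exp_lt_one_iff]; linarith
      linarith
    exact mul_nonneg h1 (tsum_nonneg fun n =>
      mul_nonneg (Real.exp_pos _).le (hnonneg _ (by omega)))
  constructor
  · -- forward
    intro h a ha
    set N : ℝ → ℕ := fun lam => ⌈(lam ^ 2)⁻¹⌉₊ with hNdef
    have hNt : Tendsto N (nhdsWithin 0 (Set.Ioi 0)) atTop := by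
      apply tendsto_nat_ceil_atTop.comp
      apply tendsto_inv_nhdsGT_zero.comp
      rw [tendsto_nhdsWithin_iff]
      constructor
      · exact ((continuous_pow 2).tendsto' 0 0 (by simp)).mono_left nhdsWithin_le_nhds
      · filter_upwards [self_mem_nhdsWithin] with x hx
        exact Set.mem_Ioi.mpr (pow_pos (Set.mem_Ioi.mp hx) 2)
    have hpart1 : Tendsto (fun lam => R (N lam) / ((N lam : ℝ)) ^ (a/2))
        (nhdsWithin 0 (Set.Ioi 0)) (nhds 0) := (h (a/2) (by linarith)).comp hNt
    have hpart2 : Tendsto (fun lam : ℝ => (lam⁻¹) ^ (1 - a) * Real.exp (-(1/2) * lam⁻¹))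
        (nhdsWithin 0 (Set.Ioi 0)) (nhds 0) :=
      (tendsto_rpow_mul_exp_neg_mul_atTop_nhds_zero (1-a) (1/2) one_half_pos).comp
        tendsto_inv_nhdsGT_zero
    have hG : Tendsto (fun lam : ℝ =>
        (2:ℝ) ^ (a/2) * (R (N lam) / ((N lam : ℝ)) ^ (a/2))
          + (4*c*Real.exp 1) * ((lam⁻¹) ^ (1 - a) * Real.exp (-(1/2) * lam⁻¹)))
        (nhdsWithin 0 (Set.Ioi 0)) (nhds 0) := by
      have := (hpart1.const_mul ((2:ℝ) ^ (a/2))).add (hpart2.const_mul (4*c*Real.exp 1))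
      simpa using this
    apply squeeze_zero' ?_ ?_ hG
    · filter_upwards [self_mem_nhdsWithin] with lam hl
      exact mul_nonneg (hdanonneg lam hl) (Real.rpow_nonneg (le_of_lt hl) a)
    · filter_upwards [Ioc_mem_nhdsGT_of_mem
        (by constructor <;> norm_num : (0:ℝ) ∈ Set.Ico (0:ℝ) 1)] with lam hlam
      obtain ⟨hl0, hl1⟩ := hlam
      set n : ℕ := N lam with hn
      have hn1 : 1 ≤ n := Nat.ceil_pos.mpr (by positivity)
      have hnge : (lam ^ 2)⁻¹ ≤ (n : ℝ) := Nat.le_ceil _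
      have hnle : (n : ℝ) ≤ (lam ^ 2)⁻¹ + 1 := (Nat.ceil_lt_add_one (by positivity)).le
      have hnpos : (0:ℝ) < (n : ℝ) := by exact_mod_cast hn1
      have hl2 : lam ^ 2 ≤ 1 := by nlinarith
      have hl2n : lam ^ 2 * (n : ℝ) ≤ 2 := by
        have h1 : lam ^ 2 * (n : ℝ) ≤ lam ^ 2 * ((lam ^ 2)⁻¹ + 1) :=
          mul_le_mul_of_nonneg_left hnle (by positivity)
        have h2 : lam ^ 2 * ((lam ^ 2)⁻¹ + 1) = 1 + lam ^ 2 := by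
          field_simp
        nlinarith
      have hla : (0:ℝ) ≤ lam ^ a := Real.rpow_nonneg hl0.le a
      -- main comparison
      have hmain : discountedAggregate R lam * lam ^ a ≤
          (R n + 4 * c * Real.exp 1 * Real.exp (-(n : ℝ) * lam / 2) / lam) * lam ^ a :=
        mul_le_mul_of_nonneg_right
          (ConsistencyAux.upper_bound R c hc hnonneg hmono hlin hl0 hl1 hn1) hla
      -- term A
      have hkey : lam ^ a ≤ (2:ℝ) ^ (a/2) / (n : ℝ) ^ (a/2) := by
        have e1 : lam ^ a = (lam ^ 2) ^ (a/2) := by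
          rw [← Real.rpow_natCast lam 2, ← Real.rpow_mul hl0.le]
          congr 1; push_cast; ring
        have e2 : lam ^ 2 ≤ 2 / (n : ℝ) := by
          rw [le_div_iff₀ hnpos]; linarith
        have e3 : (lam ^ 2) ^ (a/2) ≤ ((2:ℝ) / (n : ℝ)) ^ (a/2) :=
          Real.rpow_le_rpow (by positivity) e2 (by linarith)
        have e4 : ((2:ℝ) / (n : ℝ)) ^ (a/2) = (2:ℝ) ^ (a/2) / (n : ℝ) ^ (a/2) :=
          Real.div_rpow (by norm_num) hnpos.le _
        rw [e1]; rw [e4] at e3; exact e3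
      have hA : R n * lam ^ a ≤ (2:ℝ) ^ (a/2) * (R n / (n : ℝ) ^ (a/2)) := by
        have := mul_le_mul_of_nonneg_left hkey (hnonneg n hn1)
        calc R n * lam ^ a ≤ R n * ((2:ℝ) ^ (a/2) / (n : ℝ) ^ (a/2)) := this
          _ = (2:ℝ) ^ (a/2) * (R n / (n : ℝ) ^ (a/2)) := by ring
      -- term B
      have hBe : lam ^ a / lam = (lam⁻¹) ^ (1 - a) := by
        rw [Real.inv_rpow hl0.le, ← Real.rpow_neg hl0.le,
          show -(1 - a) = a - 1 by ring, Real.rpow_sub hl0, Real.rpow_one]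
      have hexps : Real.exp (-(n : ℝ) * lam / 2) ≤ Real.exp (-(1/2) * lam⁻¹) := by
        apply Real.exp_le_exp.mpr
        have h1 : (lam ^ 2)⁻¹ * lam ≤ (n : ℝ) * lam :=
          mul_le_mul_of_nonneg_right hnge hl0.le
        have h2 : (lam ^ 2)⁻¹ * lam = lam⁻¹ := by
          field_simp
        nlinarith
      have hB : (4 * c * Real.exp 1 * Real.exp (-(n : ℝ) * lam / 2) / lam) * lam ^ a ≤
          (4*c*Real.exp 1) * ((lam⁻¹) ^ (1 - a) * Real.exp (-(1/2) * lam⁻¹)) := by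
        have e5 : (4 * c * Real.exp 1 * Real.exp (-(n : ℝ) * lam / 2) / lam) * lam ^ a
            = (4*c*Real.exp 1) * ((lam ^ a / lam) * Real.exp (-(n : ℝ) * lam / 2)) := by
          ring
        rw [e5, hBe]
        refine mul_le_mul_of_nonneg_left ?_ (by positivity)
        exact mul_le_mul_of_nonneg_left hexps (by positivity)
      calc discountedAggregate R lam * lam ^ a
          ≤ (R n + 4 * c * Real.exp 1 * Real.exp (-(n : ℝ) * lam / 2) / lam) * lam ^ a :=
            hmain
        _ = R n * lam ^ a
            + (4 * c * Real.exp 1 * Real.exp (-(n : ℝ) * lam / 2) / lam) * lam ^ a := by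
            ring
        _ ≤ (2:ℝ) ^ (a/2) * (R n / (n : ℝ) ^ (a/2))
            + (4*c*Real.exp 1) * ((lam⁻¹) ^ (1 - a) * Real.exp (-(1/2) * lam⁻¹)) := by
            exact add_le_add hA hB
  · -- backward
    intro h a ha
    have hcomp : Tendsto (fun T : ℕ => ((T : ℝ))⁻¹) atTop (nhdsWithin 0 (Set.Ioi 0)) := by
      rw [tendsto_nhdsWithin_iff]
      refine ⟨tendsto_inv_atTop_zero.comp tendsto_natCast_atTop_atTop, ?_⟩
      filter_upwards [eventually_gt_atTop 0] with T hT
      have : (0:ℝ) < (T : ℝ) := Nat.cast_pos.mpr hT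
      exact Set.mem_Ioi.mpr (inv_pos.mpr this)
    have h2 := (h a ha).comp hcomp
    apply squeeze_zero' ?_ ?_ (by simpa using h2.const_mul (Real.exp 1))
    · filter_upwards [eventually_ge_atTop 1] with T hT
      exact div_nonneg (hnonneg T hT) (Real.rpow_nonneg (Nat.cast_nonneg T) a)
    · filter_upwards [eventually_ge_atTop 1] with T hT
      have hT0 : (0:ℝ) < (T : ℝ) := by
        have : 0 < T := by omega
        exact_mod_cast this
      have hlow := ConsistencyAux.lower_bound R c hnonneg hmono hlin
        (inv_pos.mpr hT0) hT
      have he : -(T : ℝ) * ((T : ℝ))⁻¹ = -1 := by field_simp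
      rw [he] at hlow
      have hee : Real.exp (-1) * Real.exp 1 = 1 := by
        rw [← Real.exp_add]; simp
      have hRT : R T ≤ Real.exp 1 * discountedAggregate R ((T : ℝ)⁻¹) := by
        have hmul := mul_le_mul_of_nonneg_right hlow (Real.exp_pos 1).le
        calc R T = R T * (Real.exp (-1) * Real.exp 1) := by rw [hee]; ring
          _ = R T * Real.exp (-1) * Real.exp 1 := by ring
          _ ≤ discountedAggregate R ((T : ℝ)⁻¹) * Real.exp 1 := hmul
          _ = Real.exp 1 * discountedAggregate R ((T : ℝ)⁻¹) := by ring
      have hTa : (0:ℝ) < (T : ℝ) ^ a := Real.rpow_pos_of_pos hT0 a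
      have hinv : ((T : ℝ)⁻¹) ^ a = ((T : ℝ) ^ a)⁻¹ := Real.inv_rpow hT0.le a
      calc R T / (T : ℝ) ^ a
          ≤ (Real.exp 1 * discountedAggregate R ((T : ℝ)⁻¹)) / (T : ℝ) ^ a := by
            gcongr
        _ = Real.exp 1 * (discountedAggregate R ((T : ℝ)⁻¹) * ((T : ℝ)⁻¹) ^ a) := by
            rw [hinv]; ring
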